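/- Let β ≥ 0, c ≥ 0, t > 1 and M ≥ 1. Let φ : ℝ^{β+2} → ℝ be c-Lipschitz for the sup metric, and let φ_t : ℝ^{β+2} → ℝ satisfy |φ_t(v) − φ(v)| ≤ log_t M for all v. Given any x : ℕ → ℝ and y_0 ∈ ℝ, define y_{i+1} = φ(y_i, x_i, …, x_{i+β}) and y'_{i+1} = φ_t(y'_i, x_i, …, x_{i+β}) with y'_0 = y_0. Then |y_i − y'_i| ≤ P_{i−1}(c)·log_t M for all i ≥ 0. -/
import Mathlib


/-- comparison between the iterated dynamics of a `c`-Lipschitz relative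
`(max,+)`-function `φ` and of a function `φ_t` uniformly `log_t M`-close to it:
`|y_i − y'_i| ≤ P_{i−1}(c) · log_t M` for all `i`, where `P_{i-1}(c) = ∑_{k<i} c^k`. -/
theorem statement4 (β : ℕ) (c t M : ℝ) (hc : 0 ≤ c) (ht : 1 < t) (hM : 1 ≤ M)
    (φ φt : (Fin (β + 2) → ℝ) → ℝ)
    (hlip : ∀ v w : Fin (β + 2) → ℝ, |φ v - φ w| ≤ c * dist v w)
    (hclose : ∀ v : Fin (β + 2) → ℝ, |φt v - φ v| ≤ Real.log M / Real.log t)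
    (x y y' : ℕ → ℝ) (h0 : y' 0 = y 0)
    (hy : ∀ i : ℕ, y (i + 1) = φ (Fin.cons (y i) (fun k : Fin (β + 1) => x (i + (k : ℕ)))))
    (hy' : ∀ i : ℕ, y' (i + 1) = φt (Fin.cons (y' i) (fun k : Fin (β + 1) => x (i + (k : ℕ))))) :
    ∀ i : ℕ, |y i - y' i| ≤ (∑ k ∈ Finset.range i, c ^ k) * (Real.log M / Real.log t) := by
  have hL : 0 ≤ Real.log M / Real.log t :=
    div_nonneg (Real.log_nonneg hM) (Real.log_nonneg ht.le)
  intro i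
  induction i with
  | zero => simp [h0]
  | succ i ih =>
    set v : Fin (β + 2) → ℝ := Fin.cons (y i) (fun k : Fin (β + 1) => x (i + (k : ℕ))) with hv
    set w : Fin (β + 2) → ℝ := Fin.cons (y' i) (fun k : Fin (β + 1) => x (i + (k : ℕ))) with hw
    have hdist : dist v w ≤ |y i - y' i| := by
      rw [dist_pi_le_iff (abs_nonneg _)]
      intro j
      refine Fin.cases ?_ ?_ j
      · simp [hv, hw, Real.dist_eq]
      · intro k; simp [hv, hw]
    have key : |y (i + 1) - y' (i + 1)| ≤ c * |y i - y' i| + Real.log M / Real.log t := by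
      rw [hy, hy']
      calc |φ v - φt w| = |(φ v - φ w) + (φ w - φt w)| := by ring_nf
        _ ≤ |φ v - φ w| + |φ w - φt w| := abs_add_le _ _
        _ ≤ c * dist v w + Real.log M / Real.log t := by
            have := hclose w
            rw [abs_sub_comm] at this
            exact add_le_add (hlip v w) this
        _ ≤ c * |y i - y' i| + Real.log M / Real.log t := by
            gcongr
    calc |y (i + 1) - y' (i + 1)| ≤ c * |y i - y' i| + Real.log M / Real.log t := key
      _ ≤ c * ((∑ k ∈ Finset.range i, c ^ k) * (Real.log M / Real.log t))
            + Real.log M / Real.log t := by gcongr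
      _ = (∑ k ∈ Finset.range (i + 1), c ^ k) * (Real.log M / Real.log t) := by
          rw [geom_sum_succ]; ring
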